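/- Let R₁, R₂ ⊆ ℤ^d be finite regions with |∂R₁|, |∂R₂| ≤ n and B_ℓ(R₁) = B_ℓ(R₂) for some ℓ > 0. Then there is a constant b₃ = b₃(d) such that |R₁ Δ R₂|^{1/2} ≤ b₃ 2^{ℓ/2} n^{1/2}. -/

import Mathlib

/-- Points of the lattice `ℤ^d`. -/
abbrev Pt (d : ℕ) := Fin d → ℤ

/-- Two lattice points are adjacent if they are distinct and at `L^∞`-distance at most 1
(i.e. exactly 1). -/
def adj {d : ℕ} (s t : Pt d) : Prop := s ≠ t ∧ ∀ i, |s i - t i| ≤ 1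

/-- A set `R ⊆ ℤ^d` is connected if any two of its points are joined by a path inside `R`
whose consecutive points are at `L^∞`-distance 1. -/
def connectedIn {d : ℕ} (R : Set (Pt d)) : Prop :=
  ∀ s ∈ R, ∀ t ∈ R, Relation.ReflTransGen (fun a b => a ∈ R ∧ b ∈ R ∧ adj a b) s t

/-- The external boundary `∂R = {s ∉ R : dist_∞(s, R) = 1}`. -/
def extBoundary {d : ℕ} (R : Set (Pt d)) : Set (Pt d) :=
  {s | s ∉ R ∧ ∃ t ∈ R, adj s t}

/-- The interior `Int R`: the union of the finite connected components of the complement. -/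
def latticeInt {d : ℕ} (R : Set (Pt d)) : Set (Pt d) :=
  {s | s ∉ R ∧
    Set.Finite {t | Relation.ReflTransGen (fun a b => a ∉ R ∧ b ∉ R ∧ adj a b) s t}}

/-- The `ℓ`-cube based at `2^ℓ s`: `(∏_i [2^ℓ s_i, 2^ℓ (s_i+1))) ∩ ℤ^d`. -/
def cube {d : ℕ} (ℓ : ℕ) (s : Pt d) : Set (Pt d) :=
  {t | ∀ i, 2 ^ ℓ * s i ≤ t i ∧ t i < 2 ^ ℓ * (s i + 1)}

/-- The coarse-grained region `B_ℓ(R)`: the union of all `ℓ`-cubes containing at least half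
of their `2^{ℓ d}` points in `R`. -/
def coarse {d : ℕ} (ℓ : ℕ) (R : Set (Pt d)) : Set (Pt d) :=
  ⋃ s ∈ {s : Pt d | 2 ^ (ℓ * d) ≤ 2 * (cube ℓ s ∩ R).ncard}, cube ℓ s

noncomputable section CoarseAux
open Classical Finset

def boxF {d : ℕ} (c : Pt d) (n : Fin d → ℕ) : Finset (Pt d) :=
  Fintype.piFinset fun i => Finset.Ico (c i) (c i + n i)

lemma mem_boxF {d : ℕ} {c : Pt d} {n : Fin d → ℕ} {t : Pt d} :
    t ∈ boxF c n ↔ ∀ i, c i ≤ t i ∧ t i < c i + n i := by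
  simp [boxF, Fintype.mem_piFinset, Finset.mem_Ico]

lemma card_boxF {d : ℕ} (c : Pt d) (n : Fin d → ℕ) :
    (boxF c n).card = ∏ i, n i := by
  simp [boxF, Fintype.card_piFinset, Int.card_Ico]

def sbdry {d : ℕ} (A : Set (Pt d)) (Q : Finset (Pt d)) : Finset (Pt d) :=
  Q.filter (fun p => ∃ q ∈ Q, adj p q ∧ ((p ∈ A) ↔ (q ∉ A)))

lemma mem_sbdry {d : ℕ} {A : Set (Pt d)} {Q : Finset (Pt d)} {p : Pt d} :
    p ∈ sbdry A Q ↔ p ∈ Q ∧ ∃ q ∈ Q, adj p q ∧ ((p ∈ A) ↔ (q ∉ A)) := by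
  simp [sbdry]

lemma sbdry_compl {d : ℕ} (A : Set (Pt d)) (Q : Finset (Pt d)) :
    sbdry Aᶜ Q = sbdry A Q := by
  ext p
  simp only [mem_sbdry, Set.mem_compl_iff]
  constructor <;> (rintro ⟨h0, q, hq, ha, hiff⟩; exact ⟨h0, q, hq, ha, by tauto⟩)

lemma sbdry_subset {d : ℕ} (A : Set (Pt d)) {Q Q' : Finset (Pt d)} (h : Q' ⊆ Q) :
    sbdry A Q' ⊆ sbdry A Q := by
  intro p hp
  rw [mem_sbdry] at *
  obtain ⟨h1, q, h2, h3⟩ := hp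
  exact ⟨h h1, q, h h2, h3⟩

lemma segment_lemma {d : ℕ} {c : Pt d} {n : Fin d → ℕ} (A : Set (Pt d)) (j : Fin d) :
    ∀ m : ℕ, ∀ x y : Pt d, x ∈ boxF c n → y ∈ boxF c n → x ∈ A → y ∉ A →
      (∀ i, i ≠ j → x i = y i) → (x j - y j).natAbs ≤ m →
      ∃ b ∈ sbdry A (boxF c n), b ∉ A ∧ ∀ i, i ≠ j → b i = x i := by
  intro m
  induction m with
  | zero =>
    intro x y hx hy hxA hyA hoff habs
    exfalso
    have : x = y := by
      funext i
      by_cases hi : i = j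
      · subst hi; omega
      · exact hoff i hi
    exact hyA (this ▸ hxA)
  | succ m ih =>
    intro x y hx hy hxA hyA hoff habs
    by_cases hxy : x j = y j
    · exfalso
      have : x = y := by
        funext i
        by_cases hi : i = j
        · subst hi; exact hxy
        · exact hoff i hi
      exact hyA (this ▸ hxA)
    · set s : ℤ := if x j < y j then 1 else -1 with hs
      have hs1 : (x j < y j ∧ s = 1) ∨ (y j < x j ∧ s = -1) := by
        rcases lt_or_gt_of_ne hxy with h | h
        · left; exact ⟨h, by simp [hs, h]⟩
        · right; exact ⟨h, by simp [hs, not_lt_of_gt h]⟩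
      set z : Pt d := Function.update x j (x j + s) with hz
      have hzj : z j = x j + s := by simp [hz]
      have hzoff : ∀ i, i ≠ j → z i = x i := by
        intro i hi; simp [hz, Function.update_of_ne hi]
      have hzbox : z ∈ boxF c n := by
        rw [mem_boxF] at hx hy ⊢
        intro i
        by_cases hi : i = j
        · subst hi
          have h1 := hx i; have h2 := hy i
          rw [hzj]; rcases hs1 with ⟨h, h'⟩ | ⟨h, h'⟩ <;> omega
        · rw [hzoff i hi]; exact hx i
      have hzx : z ≠ x := by
        intro h
        have := congrFun h j
        rw [hzj] at this
        rcases hs1 with ⟨_, h'⟩ | ⟨_, h'⟩ <;> omega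
      have hadj : adj z x := by
        refine ⟨hzx, fun i => ?_⟩
        by_cases hi : i = j
        · subst hi; rw [hzj]
          rcases hs1 with ⟨_, h'⟩ | ⟨_, h'⟩ <;> rw [h'] <;> norm_num
        · rw [hzoff i hi]; simp
      by_cases hzA : z ∈ A
      · have hdist : (z j - y j).natAbs ≤ m := by
          rw [hzj]; rcases hs1 with ⟨h, h'⟩ | ⟨h, h'⟩ <;> omega
        obtain ⟨b, hb, hbA, hboff⟩ := ih z y hzbox hy hzA hyA
          (fun i hi => (hzoff i hi).trans (hoff i hi)) hdist
        exact ⟨b, hb, hbA, fun i hi => (hboff i hi).trans (hzoff i hi)⟩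
      · refine ⟨z, ?_, hzA, hzoff⟩
        rw [mem_sbdry]
        exact ⟨hzbox, x, hx, hadj, by tauto⟩

def sliceF {d : ℕ} (c : Pt d) (n : Fin d → ℕ) (j : Fin d) (h : ℕ) : Finset (Pt d) :=
  boxF (Function.update c j (c j + h)) (Function.update n j 1)

lemma mem_sliceF {d : ℕ} {c : Pt d} {n : Fin d → ℕ} {j : Fin d} {h : ℕ} (hh : h < n j)
    {t : Pt d} : t ∈ sliceF c n j h ↔ t ∈ boxF c n ∧ t j = c j + h := by
  simp only [sliceF, mem_boxF]
  constructor
  · intro H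
    have hj := H j
    rw [Function.update_self, Function.update_self] at hj
    constructor
    · intro i
      by_cases hi : i = j
      · subst hi; omega
      · have := H i
        rw [Function.update_of_ne hi, Function.update_of_ne hi] at this
        exact this
    · omega
  · rintro ⟨H, hj⟩
    intro i
    by_cases hi : i = j
    · subst hi
      rw [Function.update_self, Function.update_self]
      omega
    · rw [Function.update_of_ne hi, Function.update_of_ne hi]
      exact H i

lemma sliceF_subset {d : ℕ} {c : Pt d} {n : Fin d → ℕ} {j : Fin d} {h : ℕ} (hh : h < n j) :
    sliceF c n j h ⊆ boxF c n := fun t ht => ((mem_sliceF hh).1 ht).1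

lemma boxF_eq_biUnion {d : ℕ} (c : Pt d) (n : Fin d → ℕ) (j : Fin d) :
    boxF c n = (Finset.range (n j)).biUnion (fun h => sliceF c n j h) := by
  ext t
  simp only [Finset.mem_biUnion, Finset.mem_range]
  constructor
  · intro ht
    have h1 := (mem_boxF.1 ht) j
    refine ⟨(t j - c j).toNat, by omega, ?_⟩
    rw [mem_sliceF (by omega)]
    exact ⟨ht, by omega⟩
  · rintro ⟨h, hh, ht⟩
    exact ((mem_sliceF hh).1 ht).1

lemma sliceF_disjoint {d : ℕ} {c : Pt d} {n : Fin d → ℕ} {j : Fin d} {h h' : ℕ}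
    (hh : h < n j) (hh' : h' < n j) (hne : h ≠ h') :
    Disjoint (sliceF c n j h) (sliceF c n j h') := by
  rw [Finset.disjoint_left]
  intro t ht ht'
  have e1 := ((mem_sliceF hh).1 ht).2
  have e2 := ((mem_sliceF hh').1 ht').2
  omega

def cntIn {d : ℕ} (A : Set (Pt d)) (Q : Finset (Pt d)) : ℕ := (Q.filter (· ∈ A)).card
def cntOut {d : ℕ} (A : Set (Pt d)) (Q : Finset (Pt d)) : ℕ := (Q.filter (· ∉ A)).card

lemma cntIn_add_cntOut {d : ℕ} (A : Set (Pt d)) (Q : Finset (Pt d)) :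
    cntIn A Q + cntOut A Q = Q.card := by
  unfold cntIn cntOut
  rw [Finset.card_filter_add_card_filter_not (fun x => x ∈ A)]

lemma cntIn_compl {d : ℕ} (A : Set (Pt d)) (Q : Finset (Pt d)) :
    cntIn {x | x ∉ A} Q = cntOut A Q := by
  unfold cntIn cntOut
  apply congrArg Finset.card
  ext x
  simp [Finset.mem_filter]

lemma cntOut_compl {d : ℕ} (A : Set (Pt d)) (Q : Finset (Pt d)) :
    cntOut {x | x ∉ A} Q = cntIn A Q := by
  unfold cntIn cntOut
  apply congrArg Finset.card
  ext x
  simp [Finset.mem_filter]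

-- number of points of A in slice h that sit above a non-A point in slice h'
lemma count_shift {d : ℕ} {c : Pt d} {n : Fin d → ℕ} {j : Fin d} {h h' : ℕ}
    (hh : h < n j) (hh' : h' < n j) (A : Set (Pt d)) :
    cntIn A (sliceF c n j h) ≤ cntIn A (sliceF c n j h') +
      ((sliceF c n j h).filter (fun x => x ∈ A ∧ Function.update x j (c j + h') ∉ A)).card := by
  unfold cntIn
  set π : Pt d → Pt d := fun x => Function.update x j (c j + h') with hπ
  have hsub : (sliceF c n j h).filter (· ∈ A) ⊆
      ((sliceF c n j h).filter (fun x => x ∈ A ∧ π x ∈ A)) ∪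
      ((sliceF c n j h).filter (fun x => x ∈ A ∧ π x ∉ A)) := by
    intro x hx
    rw [Finset.mem_filter] at hx
    rw [Finset.mem_union, Finset.mem_filter, Finset.mem_filter]
    by_cases hπx : π x ∈ A
    · exact Or.inl ⟨hx.1, hx.2, hπx⟩
    · exact Or.inr ⟨hx.1, hx.2, hπx⟩
  calc ((sliceF c n j h).filter (· ∈ A)).card
      ≤ (((sliceF c n j h).filter (fun x => x ∈ A ∧ π x ∈ A)) ∪
         ((sliceF c n j h).filter (fun x => x ∈ A ∧ π x ∉ A))).card := Finset.card_le_card hsub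
    _ ≤ ((sliceF c n j h).filter (fun x => x ∈ A ∧ π x ∈ A)).card +
        ((sliceF c n j h).filter (fun x => x ∈ A ∧ π x ∉ A)).card := Finset.card_union_le _ _
    _ ≤ ((sliceF c n j h').filter (· ∈ A)).card +
        ((sliceF c n j h).filter (fun x => x ∈ A ∧ π x ∉ A)).card := by
        gcongr ?_ + _
        apply Finset.card_le_card_of_injOn π
        · intro x hx
          rw [Finset.mem_coe, Finset.mem_filter] at hx
          obtain ⟨hxs, _, hπA⟩ := hx
          rw [Finset.mem_coe, Finset.mem_filter]
          refine ⟨?_, hπA⟩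
          rw [mem_sliceF hh']
          have hxb := (sliceF_subset hh) hxs
          rw [mem_boxF] at hxb ⊢
          constructor
          · intro i
            by_cases hi : i = j
            · subst hi; rw [hπ]; simp only [Function.update_self]; omega
            · rw [hπ]; simp only [Function.update_of_ne hi]; exact hxb i
          · rw [hπ]; simp only [Function.update_self]
        · intro x hx y hy hxy
          simp only [Finset.mem_coe, Finset.mem_filter] at hx hy
          have ex := ((mem_sliceF hh).1 hx.1).2
          have ey := ((mem_sliceF hh).1 hy.1).2
          funext i
          by_cases hi : i = j
          · subst hi; omega
          · have := congrFun hxy i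
            rw [hπ] at this
            simpa [Function.update_of_ne hi] using this

-- mixed columns are bounded by the boundary
lemma mixed_le_sbdry {d : ℕ} {c : Pt d} {n : Fin d → ℕ} {j : Fin d} {h h' : ℕ}
    (hh : h < n j) (hh' : h' < n j) (A : Set (Pt d)) :
    ((sliceF c n j h).filter (fun x => x ∈ A ∧ Function.update x j (c j + h') ∉ A)).card ≤
      (sbdry A (boxF c n)).card := by
  have hex : ∀ x : Pt d, ∃ b : Pt d,
      x ∈ (sliceF c n j h).filter (fun x => x ∈ A ∧ Function.update x j (c j + h') ∉ A) →
      b ∈ sbdry A (boxF c n) ∧ ∀ i, i ≠ j → b i = x i := by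
    intro x
    by_cases hx : x ∈ (sliceF c n j h).filter
        (fun x => x ∈ A ∧ Function.update x j (c j + h') ∉ A)
    · rw [Finset.mem_filter] at hx
      obtain ⟨hxs, hxA, hπA⟩ := hx
      have hxb : x ∈ boxF c n := (sliceF_subset hh) hxs
      have hπb : Function.update x j (c j + h') ∈ boxF c n := by
        rw [mem_boxF] at hxb ⊢
        intro i
        by_cases hi : i = j
        · subst hi; simp only [Function.update_self]; omega
        · simp only [Function.update_of_ne hi]; exact hxb i
      obtain ⟨b, hb1, _, hb3⟩ := segment_lemma A j
        ((x j - Function.update x j (c j + h') j).natAbs) x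
        (Function.update x j (c j + h')) hxb hπb hxA hπA
        (fun i hi => by simp [Function.update_of_ne hi]) le_rfl
      exact ⟨b, fun _ => ⟨hb1, hb3⟩⟩
    · exact ⟨x, fun h => absurd h hx⟩
  choose f hf using hex
  apply Finset.card_le_card_of_injOn f
  · intro x hx; exact (hf x hx).1
  · intro x hx y hy hxy
    simp only [Finset.mem_coe, Finset.mem_filter] at hx hy
    have hx' : x ∈ (sliceF c n j h).filter
        (fun x => x ∈ A ∧ Function.update x j (c j + h') ∉ A) := by
      rw [Finset.mem_filter]; exact ⟨hx.1, hx.2⟩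
    have hy' : y ∈ (sliceF c n j h).filter
        (fun x => x ∈ A ∧ Function.update x j (c j + h') ∉ A) := by
      rw [Finset.mem_filter]; exact ⟨hy.1, hy.2⟩
    have ex := ((mem_sliceF hh).1 hx.1).2
    have ey := ((mem_sliceF hh).1 hy.1).2
    funext i
    by_cases hi : i = j
    · subst hi; omega
    · rw [← (hf x hx').2 i hi, ← (hf y hy').2 i hi, hxy]

lemma sbdry_sub_Q {d : ℕ} (A : Set (Pt d)) (Q : Finset (Pt d)) : sbdry A Q ⊆ Q :=
  Finset.filter_subset _ _

/-- The main inductive step, assuming the minority is on the `A` side. -/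
lemma aux_step {d k L : ℕ} {c : Pt d} {n : Fin d → ℕ} (hL : ∀ i, n i ≤ L)
    (j : Fin d) (hj : 2 ≤ n j)
    (hk : (Finset.univ.filter fun i => 2 ≤ n i).card ≤ k + 1)
    (IH : ∀ (c : Pt d) (n : Fin d → ℕ), (∀ i, n i ≤ L) →
      ((Finset.univ.filter fun i => 2 ≤ n i).card ≤ k) → ∀ A : Set (Pt d),
      min (cntIn A (boxF c n)) (cntOut A (boxF c n)) ≤
        (2 * k + 1) * L * (sbdry A (boxF c n)).card)
    (A : Set (Pt d))
    (hmin : cntIn A (boxF c n) ≤ cntOut A (boxF c n)) :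
    cntIn A (boxF c n) ≤ (2 * (k + 1) + 1) * L * (sbdry A (boxF c n)).card := by
  set Q := boxF c n with hQ
  set SB := (sbdry A Q).card with hSB
  set a : ℕ → ℕ := fun h => cntIn A (sliceF c n j h) with ha
  set b : ℕ → ℕ := fun h => cntOut A (sliceF c n j h) with hb
  set V : ℕ := ∏ i, Function.update n j 1 i with hV
  have hslicecard : ∀ h : ℕ, (sliceF c n j h).card = V := fun h => card_boxF _ _
  have hab : ∀ h : ℕ, a h + b h = V := by
    intro h
    rw [ha, hb]
    simp only
    rw [cntIn_add_cntOut]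
    exact hslicecard h
  have hdisjf : ∀ (p : Pt d → Prop) [DecidablePred p], ∀ h ∈ Finset.range (n j),
      ∀ h' ∈ Finset.range (n j), h ≠ h' →
      Disjoint ((sliceF c n j h).filter p) ((sliceF c n j h').filter p) := by
    intro p _ h hh h' hh' hne
    rw [Finset.mem_range] at hh hh'
    exact Finset.disjoint_filter_filter (sliceF_disjoint hh hh' hne)
  have hcardA : cntIn A Q = ∑ h ∈ Finset.range (n j), a h := by
    rw [ha]; unfold cntIn
    rw [hQ, boxF_eq_biUnion c n j, Finset.filter_biUnion, Finset.card_biUnion (hdisjf _)]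
  have hcardB : cntOut A Q = ∑ h ∈ Finset.range (n j), b h := by
    rw [hb]; unfold cntOut
    rw [hQ, boxF_eq_biUnion c n j, Finset.filter_biUnion, Finset.card_biUnion (hdisjf _)]
  have hcardQ : Q.card = (n j) * V := by
    rw [hQ, card_boxF, hV, ← Finset.mul_prod_erase Finset.univ n (Finset.mem_univ j),
      Finset.prod_update_of_mem (Finset.mem_univ j), one_mul, Finset.erase_eq]
  have hstar : ∃ h' ∈ Finset.range (n j), 2 * a h' ≤ V := by
    by_contra hcon
    push_neg at hcon
    have h1 : ∀ h ∈ Finset.range (n j), V + 1 ≤ 2 * a h := fun h hh => hcon h hh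
    have h2 : (n j) * (V + 1) ≤ 2 * ∑ h ∈ Finset.range (n j), a h := by
      calc (n j) * (V + 1) = ∑ _h ∈ Finset.range (n j), (V + 1) := by
            rw [Finset.sum_const, Finset.card_range, smul_eq_mul]
        _ ≤ ∑ h ∈ Finset.range (n j), 2 * a h := Finset.sum_le_sum h1
        _ = 2 * ∑ h ∈ Finset.range (n j), a h := by rw [Finset.mul_sum]
    have h3 : 2 * ∑ h ∈ Finset.range (n j), a h ≤
        (∑ h ∈ Finset.range (n j), a h) + (∑ h ∈ Finset.range (n j), b h) := by
      rw [← hcardA, ← hcardB]; omega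
    have h4 : (∑ h ∈ Finset.range (n j), a h) + (∑ h ∈ Finset.range (n j), b h) = n j * V := by
      rw [← hcardA, ← hcardB, cntIn_add_cntOut]
      exact hcardQ
    have h5 : (n j) * (V + 1) = n j * V + n j := by ring
    omega
  obtain ⟨h', hh'r, hh'⟩ := hstar
  rw [Finset.mem_range] at hh'r
  have hper : ∀ h ∈ Finset.range (n j), a h ≤ min (a h) (b h) + 2 * SB := by
    intro h hhr
    rw [Finset.mem_range] at hhr
    rcases le_or_gt (a h) (b h) with hc | hc
    · rw [min_eq_left hc]; omega
    · rw [min_eq_right hc.le]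
      set M := ((sliceF c n j h).filter
        (fun x => x ∈ A ∧ Function.update x j (c j + h') ∉ A)).card with hM
      have e1 : a h ≤ a h' + M := count_shift hhr hh'r A
      have e2 : M ≤ SB := mixed_le_sbdry hhr hh'r A
      have e3 := hab h
      omega
  have hsb : ∑ h ∈ Finset.range (n j), (sbdry A (sliceF c n j h)).card ≤ SB := by
    have hd : ∀ h ∈ Finset.range (n j), ∀ h' ∈ Finset.range (n j), h ≠ h' →
        Disjoint (sbdry A (sliceF c n j h)) (sbdry A (sliceF c n j h')) := by
      intro h hh h' hh' hne
      rw [Finset.mem_range] at hh hh'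
      exact (sliceF_disjoint hh hh' hne).mono (sbdry_sub_Q _ _) (sbdry_sub_Q _ _)
    calc ∑ h ∈ Finset.range (n j), (sbdry A (sliceF c n j h)).card
        = ((Finset.range (n j)).biUnion (fun h => sbdry A (sliceF c n j h))).card :=
          (Finset.card_biUnion hd).symm
      _ ≤ SB := by
          apply Finset.card_le_card
          apply Finset.biUnion_subset.2
          intro h hh
          rw [Finset.mem_range] at hh
          exact sbdry_subset A (sliceF_subset hh)
  have hIH : ∀ h ∈ Finset.range (n j), min (a h) (b h) ≤
      (2 * k + 1) * L * (sbdry A (sliceF c n j h)).card := by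
    intro h hh
    have hL1 : 1 ≤ L := le_trans (by omega) (hL j)
    have hL' : ∀ i, Function.update n j 1 i ≤ L := by
      intro i
      by_cases hi : i = j
      · subst hi; rw [Function.update_self]; exact hL1
      · rw [Function.update_of_ne hi]; exact hL i
    have hk' : (Finset.univ.filter fun i => 2 ≤ Function.update n j 1 i).card ≤ k := by
      have hsub : (Finset.univ.filter fun i => 2 ≤ Function.update n j 1 i) ⊆
          (Finset.univ.filter fun i => 2 ≤ n i).erase j := by
        intro i hi
        rw [Finset.mem_filter] at hi
        have hij : i ≠ j := by
          intro hij; subst hij; rw [Function.update_self] at hi; omega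
        rw [Finset.mem_erase, Finset.mem_filter]
        rw [Function.update_of_ne hij] at hi
        exact ⟨hij, hi⟩
      have hjmem : j ∈ Finset.univ.filter fun i => 2 ≤ n i := by
        rw [Finset.mem_filter]; exact ⟨Finset.mem_univ j, hj⟩
      calc (Finset.univ.filter fun i => 2 ≤ Function.update n j 1 i).card
          ≤ ((Finset.univ.filter fun i => 2 ≤ n i).erase j).card := Finset.card_le_card hsub
        _ = (Finset.univ.filter fun i => 2 ≤ n i).card - 1 := Finset.card_erase_of_mem hjmem
        _ ≤ k := by omega
    exact IH _ _ hL' hk' A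
  have hLj : n j ≤ L := hL j
  calc cntIn A Q = ∑ h ∈ Finset.range (n j), a h := hcardA
    _ ≤ ∑ h ∈ Finset.range (n j), (min (a h) (b h) + 2 * SB) := Finset.sum_le_sum hper
    _ = (∑ h ∈ Finset.range (n j), min (a h) (b h)) + (n j) * (2 * SB) := by
        rw [Finset.sum_add_distrib, Finset.sum_const, Finset.card_range, smul_eq_mul]
    _ ≤ (∑ h ∈ Finset.range (n j), (2 * k + 1) * L * (sbdry A (sliceF c n j h)).card)
        + (n j) * (2 * SB) := by gcongr ?_ + _; exact Finset.sum_le_sum hIH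
    _ = (2 * k + 1) * L * (∑ h ∈ Finset.range (n j), (sbdry A (sliceF c n j h)).card)
        + (n j) * (2 * SB) := by rw [Finset.mul_sum]
    _ ≤ (2 * k + 1) * L * SB + L * (2 * SB) := by gcongr
    _ = (2 * (k + 1) + 1) * L * SB := by ring

lemma iso_trivial {d : ℕ} {c : Pt d} {n : Fin d → ℕ} (hall : ∀ i, n i ≤ 1)
    (A : Set (Pt d)) (X : ℕ) :
    min (cntIn A (boxF c n)) (cntOut A (boxF c n)) ≤ X := by
  have hcard : (boxF c n).card ≤ 1 := by
    rw [card_boxF]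
    calc ∏ i, n i ≤ ∏ _i : Fin d, 1 :=
          Finset.prod_le_prod (fun i _ => Nat.zero_le _) (fun i _ => hall i)
      _ = 1 := Finset.prod_const_one
  have h3 := cntIn_add_cntOut A (boxF c n)
  omega

lemma iso {d : ℕ} (L : ℕ) : ∀ (k : ℕ) (c : Pt d) (n : Fin d → ℕ), (∀ i, n i ≤ L) →
    ((Finset.univ.filter fun i => 2 ≤ n i).card ≤ k) → ∀ A : Set (Pt d),
    min (cntIn A (boxF c n)) (cntOut A (boxF c n)) ≤
      (2 * k + 1) * L * (sbdry A (boxF c n)).card := by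
  intro k
  induction k with
  | zero =>
    intro c n hL hk A
    apply iso_trivial _ A
    intro i
    by_contra hcon
    have h1 : i ∈ Finset.univ.filter fun i => 2 ≤ n i := by
      rw [Finset.mem_filter]; exact ⟨Finset.mem_univ i, by omega⟩
    have := Finset.card_pos.2 ⟨i, h1⟩
    omega
  | succ k IH =>
    intro c n hL hk A
    by_cases hex : ∃ j, 2 ≤ n j
    · obtain ⟨j, hj⟩ := hex
      rcases le_total (cntIn A (boxF c n)) (cntOut A (boxF c n)) with hm | hm
      · rw [min_eq_left hm]
        exact aux_step hL j hj hk IH A hm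
      · set A' : Set (Pt d) := {x | x ∉ A} with hA'
        have e1 : cntIn A' (boxF c n) = cntOut A (boxF c n) := cntIn_compl A _
        have e2 : cntOut A' (boxF c n) = cntIn A (boxF c n) := cntOut_compl A _
        have e3 : sbdry A' (boxF c n) = sbdry A (boxF c n) := sbdry_compl A _
        have hm' : cntIn A' (boxF c n) ≤ cntOut A' (boxF c n) := by rw [e1, e2]; exact hm
        have key := aux_step hL j hj hk IH A' hm'
        rw [e1, e3] at key
        rw [min_eq_right hm]
        exact key
    · push_neg at hex
      exact iso_trivial (fun i => by have := hex i; omega) A _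

end CoarseAux

noncomputable section CoarseAux2
open Classical Finset

/-- closed unit `L^∞` ball around `b` -/
def ballF {d : ℕ} (b : Pt d) : Finset (Pt d) :=
  Fintype.piFinset fun i => Finset.Icc (b i - 1) (b i + 1)

lemma mem_ballF {d : ℕ} {b t : Pt d} : t ∈ ballF b ↔ ∀ i, |t i - b i| ≤ 1 := by
  simp only [ballF, Fintype.mem_piFinset, Finset.mem_Icc, abs_le]
  constructor <;> (intro H i; have := H i; omega)

lemma card_ballF {d : ℕ} (b : Pt d) : (ballF b).card = 3 ^ d := by
  rw [ballF, Fintype.card_piFinset]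
  have : ∀ i : Fin d, (Finset.Icc (b i - 1) (b i + 1)).card = 3 := by
    intro i; rw [Int.card_Icc]; omega
  simp [this]

lemma sbdry_le_ext {d : ℕ} (R : Set (Pt d)) (Q : Finset (Pt d)) :
    (sbdry R Q).card ≤ 3 ^ d * (Q.filter (· ∈ extBoundary R)).card := by
  have hex : ∀ p : Pt d, ∃ b : Pt d, p ∈ sbdry R Q →
      b ∈ Q.filter (· ∈ extBoundary R) ∧ ∀ i, |p i - b i| ≤ 1 := by
    intro p
    by_cases hp : p ∈ sbdry R Q
    · rw [mem_sbdry] at hp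
      obtain ⟨hpQ, q, hqQ, hadj, hiff⟩ := hp
      by_cases hpR : p ∈ R
      · have hqR : q ∉ R := hiff.1 hpR
        refine ⟨q, fun _ => ⟨?_, fun i => hadj.2 i⟩⟩
        rw [Finset.mem_filter]
        exact ⟨hqQ, hqR, p, hpR, ⟨fun h => hadj.1 h.symm, fun i => by
          rw [abs_sub_comm]; exact hadj.2 i⟩⟩
      · have hqR : q ∈ R := by tauto
        refine ⟨p, fun _ => ⟨?_, fun i => by simp⟩⟩
        rw [Finset.mem_filter]
        exact ⟨hpQ, hpR, q, hqR, hadj⟩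
    · exact ⟨p, fun h => absurd h hp⟩
  choose f hf using hex
  apply Finset.card_le_mul_card_image_of_maps_to (fun p hp => (hf p hp).1) (3 ^ d)
  intro b _
  calc ((sbdry R Q).filter (fun a => f a = b)).card ≤ (ballF b).card := by
        apply Finset.card_le_card
        intro p hp
        rw [Finset.mem_filter] at hp
        rw [mem_ballF]
        intro i
        have := (hf p hp.1).2 i
        rw [← hp.2]
        exact this
    _ = 3 ^ d := card_ballF b

def cubeF {d : ℕ} (ℓ : ℕ) (s : Pt d) : Finset (Pt d) :=
  boxF (fun i => 2 ^ ℓ * s i) (fun _ => 2 ^ ℓ)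

lemma mem_cubeF {d : ℕ} {ℓ : ℕ} {s t : Pt d} : t ∈ cubeF ℓ s ↔ t ∈ cube ℓ s := by
  rw [cubeF, mem_boxF]
  unfold cube
  simp only [Set.mem_setOf_eq]
  constructor <;> (intro H i; have := H i; push_cast at *; constructor <;> [omega; nlinarith])

lemma card_cubeF {d : ℕ} (ℓ : ℕ) (s : Pt d) : (cubeF ℓ s).card = 2 ^ (ℓ * d) := by
  rw [cubeF, card_boxF, Finset.prod_const, Finset.card_univ, Fintype.card_fin, ← pow_mul]

def baseMap {d : ℕ} (ℓ : ℕ) (t : Pt d) : Pt d := fun i => t i / 2 ^ ℓ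

lemma mem_cube_iff {d : ℕ} {ℓ : ℕ} {s t : Pt d} : t ∈ cube ℓ s ↔ s = baseMap ℓ t := by
  have h2 : (0 : ℤ) < 2 ^ ℓ := by positivity
  unfold cube baseMap
  simp only [Set.mem_setOf_eq]
  constructor
  · intro H
    funext i
    obtain ⟨h1', h2'⟩ := H i
    have ha : s i ≤ t i / 2 ^ ℓ := (Int.le_ediv_iff_mul_le h2).2 (by linarith)
    have hb : t i / 2 ^ ℓ < s i + 1 := (Int.ediv_lt_iff_lt_mul h2).2 (by linarith)
    omega
  · intro H i
    subst H
    constructor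
    · have := (Int.le_ediv_iff_mul_le h2).1 (le_refl (t i / 2 ^ ℓ))
      linarith
    · have := (Int.ediv_lt_iff_lt_mul h2).1 (lt_add_one (t i / 2 ^ ℓ))
      linarith

lemma self_mem_cube {d : ℕ} (ℓ : ℕ) (t : Pt d) : t ∈ cube ℓ (baseMap ℓ t) :=
  mem_cube_iff.2 rfl

lemma mem_coarse {d : ℕ} {ℓ : ℕ} {R : Set (Pt d)} {p : Pt d} :
    p ∈ coarse ℓ R ↔ 2 ^ (ℓ * d) ≤ 2 * (cube ℓ (baseMap ℓ p) ∩ R).ncard := by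
  unfold coarse
  rw [Set.mem_iUnion₂]
  constructor
  · rintro ⟨s, hs, hp⟩
    rw [mem_cube_iff] at hp
    subst hp
    exact hs
  · intro h
    exact ⟨baseMap ℓ p, h, self_mem_cube ℓ p⟩

lemma ncard_cube_inter {d : ℕ} (ℓ : ℕ) (s : Pt d) (R : Set (Pt d)) :
    (cube ℓ s ∩ R).ncard = cntIn R (cubeF ℓ s) := by
  have : cube ℓ s ∩ R = ↑((cubeF ℓ s).filter (· ∈ R)) := by
    ext t
    simp only [Set.mem_inter_iff, Finset.coe_filter, Set.mem_setOf_eq, mem_cubeF]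
  rw [this, Set.ncard_coe_finset, cntIn]

lemma extBoundary_finite {d : ℕ} {R : Set (Pt d)} (hR : R.Finite) :
    (extBoundary R).Finite := by
  apply Set.Finite.subset (Set.Finite.biUnion hR (fun t _ => (ballF t).finite_toSet))
  rintro p ⟨hpR, t, htR, hadj⟩
  exact Set.mem_biUnion htR (mem_ballF.2 hadj.2)

lemma cubeF_disjoint {d ℓ : ℕ} {s s' : Pt d} (h : s ≠ s') :
    Disjoint (cubeF ℓ s) (cubeF ℓ s') := by
  rw [Finset.disjoint_left]
  intro t ht ht'
  rw [mem_cubeF, mem_cube_iff] at ht ht'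
  exact h (ht.trans ht'.symm)

lemma cube_iso {d ℓ : ℕ} (s : Pt d) (R : Set (Pt d)) :
    min (cntIn R (cubeF ℓ s)) (cntOut R (cubeF ℓ s)) ≤
      (2 * d + 1) * 2 ^ ℓ * (sbdry R (cubeF ℓ s)).card := by
  apply iso (2 ^ ℓ) d _ _ (fun i => le_rfl) _ R
  calc (Finset.univ.filter fun i : Fin d => 2 ≤ (fun _ => 2 ^ ℓ) i).card
      ≤ (Finset.univ : Finset (Fin d)).card := Finset.card_filter_le _ _
    _ = d := by simp

lemma symmdiff_coarse_bound {d ℓ : ℕ} (R : Set (Pt d)) (hR : R.Finite) :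
    (symmDiff R (coarse ℓ R)).Finite ∧
      (symmDiff R (coarse ℓ R)).ncard ≤ (2 * d + 1) * 3 ^ d * 2 ^ ℓ * (extBoundary R).ncard := by
  set C := coarse ℓ R with hC
  set T : Finset (Pt d) := hR.toFinset.image (baseMap ℓ) with hT
  set D : Finset (Pt d) := T.biUnion (fun s => (cubeF ℓ s).filter (· ∈ symmDiff R C)) with hD
  have hDC : symmDiff R C = ↑D := by
    ext p
    constructor
    · intro hp
      have hbase : baseMap ℓ p ∈ T := by
        rw [Set.mem_symmDiff] at hp
        rcases hp with ⟨hpR, _⟩ | ⟨hpC, _⟩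
        · exact Finset.mem_image.2 ⟨p, hR.mem_toFinset.2 hpR, rfl⟩
        · rw [hC, mem_coarse] at hpC
          have hne : (cube ℓ (baseMap ℓ p) ∩ R).Nonempty := by
            by_contra hcon
            rw [Set.not_nonempty_iff_eq_empty] at hcon
            rw [hcon, Set.ncard_empty] at hpC
            have : (0:ℕ) < 2 ^ (ℓ * d) := Nat.pow_pos (by norm_num)
            omega
          obtain ⟨t, htc, htR⟩ := hne
          have : baseMap ℓ p = baseMap ℓ t := mem_cube_iff.1 htc
          rw [this]
          exact Finset.mem_image.2 ⟨t, hR.mem_toFinset.2 htR, rfl⟩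
      rw [Finset.mem_coe, hD, Finset.mem_biUnion]
      exact ⟨baseMap ℓ p, hbase,
        Finset.mem_filter.2 ⟨mem_cubeF.2 (self_mem_cube ℓ p), hp⟩⟩
    · intro hp
      rw [Finset.mem_coe, hD, Finset.mem_biUnion] at hp
      obtain ⟨s, _, hps⟩ := hp
      exact (Finset.mem_filter.1 hps).2
  have hfin : (symmDiff R C).Finite := by rw [hDC]; exact D.finite_toSet
  refine ⟨hfin, ?_⟩
  have hncard : (symmDiff R C).ncard = D.card := by rw [hDC, Set.ncard_coe_finset]
  have hdisj : ∀ s ∈ T, ∀ s' ∈ T, s ≠ s' →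
      Disjoint ((cubeF ℓ s).filter (· ∈ symmDiff R C))
        ((cubeF ℓ s').filter (· ∈ symmDiff R C)) := by
    intro s _ s' _ hne
    exact (cubeF_disjoint hne).mono (Finset.filter_subset _ _) (Finset.filter_subset _ _)
  have hsum : D.card = ∑ s ∈ T, ((cubeF ℓ s).filter (· ∈ symmDiff R C)).card :=
    Finset.card_biUnion hdisj
  -- per-cube bound
  have hper : ∀ s ∈ T, ((cubeF ℓ s).filter (· ∈ symmDiff R C)).card ≤
      (2 * d + 1) * 2 ^ ℓ * (3 ^ d * ((cubeF ℓ s).filter (· ∈ extBoundary R)).card) := by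
    intro s _
    have hcards : cntIn R (cubeF ℓ s) + cntOut R (cubeF ℓ s) = 2 ^ (ℓ * d) := by
      rw [cntIn_add_cntOut, card_cubeF]
    have hmain : ((cubeF ℓ s).filter (· ∈ symmDiff R C)).card ≤
        min (cntIn R (cubeF ℓ s)) (cntOut R (cubeF ℓ s)) := by
      by_cases hgood : 2 ^ (ℓ * d) ≤ 2 * (cube ℓ s ∩ R).ncard
      · have hiff : ∀ t ∈ cubeF ℓ s, (t ∈ symmDiff R C ↔ t ∉ R) := by
          intro t ht
          have hbt : baseMap ℓ t = s := (mem_cube_iff.1 (mem_cubeF.1 ht)).symm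
          have htC : t ∈ C := by
            rw [hC, mem_coarse, hbt]
            exact hgood
          rw [Set.mem_symmDiff]
          tauto
        have heq : ((cubeF ℓ s).filter (· ∈ symmDiff R C)) = ((cubeF ℓ s).filter (· ∉ R)) :=
          Finset.filter_congr hiff
        rw [heq]
        have : ((cubeF ℓ s).filter (· ∉ R)).card = cntOut R (cubeF ℓ s) := rfl
        rw [this]
        rw [ncard_cube_inter] at hgood
        apply le_min (by omega) le_rfl
      · have hiff : ∀ t ∈ cubeF ℓ s, (t ∈ symmDiff R C ↔ t ∈ R) := by
          intro t ht
          have hbt : baseMap ℓ t = s := (mem_cube_iff.1 (mem_cubeF.1 ht)).symm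
          have htC : t ∉ C := by
            rw [hC, mem_coarse, hbt]
            exact hgood
          rw [Set.mem_symmDiff]
          tauto
        have heq : ((cubeF ℓ s).filter (· ∈ symmDiff R C)) = ((cubeF ℓ s).filter (· ∈ R)) :=
          Finset.filter_congr hiff
        rw [heq]
        have : ((cubeF ℓ s).filter (· ∈ R)).card = cntIn R (cubeF ℓ s) := rfl
        rw [this]
        rw [ncard_cube_inter] at hgood
        apply le_min le_rfl (by omega)
    calc ((cubeF ℓ s).filter (· ∈ symmDiff R C)).card
        ≤ min (cntIn R (cubeF ℓ s)) (cntOut R (cubeF ℓ s)) := hmain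
      _ ≤ (2 * d + 1) * 2 ^ ℓ * (sbdry R (cubeF ℓ s)).card := cube_iso s R
      _ ≤ (2 * d + 1) * 2 ^ ℓ * (3 ^ d * ((cubeF ℓ s).filter (· ∈ extBoundary R)).card) := by
          gcongr
          exact sbdry_le_ext R (cubeF ℓ s)
  -- sum the boundary pieces
  have hbsum : ∑ s ∈ T, ((cubeF ℓ s).filter (· ∈ extBoundary R)).card ≤
      (extBoundary R).ncard := by
    have hd2 : ∀ s ∈ T, ∀ s' ∈ T, s ≠ s' →
        Disjoint ((cubeF ℓ s).filter (· ∈ extBoundary R))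
          ((cubeF ℓ s').filter (· ∈ extBoundary R)) := by
      intro s _ s' _ hne
      exact (cubeF_disjoint hne).mono (Finset.filter_subset _ _) (Finset.filter_subset _ _)
    calc ∑ s ∈ T, ((cubeF ℓ s).filter (· ∈ extBoundary R)).card
        = (T.biUnion (fun s => (cubeF ℓ s).filter (· ∈ extBoundary R))).card :=
          (Finset.card_biUnion hd2).symm
      _ = (↑(T.biUnion (fun s => (cubeF ℓ s).filter (· ∈ extBoundary R))) : Set (Pt d)).ncard :=
          (Set.ncard_coe_finset _).symm
      _ ≤ (extBoundary R).ncard := by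
          apply Set.ncard_le_ncard _ (extBoundary_finite hR)
          intro p hp
          rw [Finset.mem_coe, Finset.mem_biUnion] at hp
          obtain ⟨s, _, hps⟩ := hp
          exact (Finset.mem_filter.1 hps).2
  calc (symmDiff R C).ncard = D.card := hncard
    _ = ∑ s ∈ T, ((cubeF ℓ s).filter (· ∈ symmDiff R C)).card := hsum
    _ ≤ ∑ s ∈ T, (2 * d + 1) * 2 ^ ℓ * (3 ^ d * ((cubeF ℓ s).filter (· ∈ extBoundary R)).card) :=
        Finset.sum_le_sum hper
    _ = (2 * d + 1) * 3 ^ d * 2 ^ ℓ *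
        ∑ s ∈ T, ((cubeF ℓ s).filter (· ∈ extBoundary R)).card := by
        rw [Finset.mul_sum]; apply Finset.sum_congr rfl; intros; ring
    _ ≤ (2 * d + 1) * 3 ^ d * 2 ^ ℓ * (extBoundary R).ncard := by gcongr

end CoarseAux2

/-- there is a constant `b₃ = b₃(d)` such that whenever finite regions
`R₁, R₂ ⊆ ℤ^d` have external boundaries of cardinality at most `n` and identical
coarse-grainings `B_ℓ(R₁) = B_ℓ(R₂)` for some `ℓ > 0`, then
`|R₁ Δ R₂|^{1/2} ≤ b₃ 2^{ℓ/2} n^{1/2}`. -/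
theorem symmdiff_bound_from_equal_coarse (d : ℕ) (hd : 1 ≤ d) :
    ∃ b₃ : ℝ, 0 < b₃ ∧
      ∀ (n ℓ : ℕ), 0 < ℓ →
        ∀ (R₁ R₂ : Set (Pt d)), R₁.Finite → R₂.Finite →
          (extBoundary R₁).ncard ≤ n → (extBoundary R₂).ncard ≤ n →
          coarse ℓ R₁ = coarse ℓ R₂ →
          Real.sqrt ((symmDiff R₁ R₂).ncard)
            ≤ b₃ * (2 : ℝ) ^ ((ℓ : ℝ) / 2) * Real.sqrt n := by
  set K : ℕ := (2 * d + 1) * 3 ^ d with hK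
  refine ⟨Real.sqrt (2 * K), Real.sqrt_pos.2 (by positivity), ?_⟩
  intro n ℓ hℓ R₁ R₂ hR₁ hR₂ hb₁ hb₂ hcoarse
  obtain ⟨hf₁, he₁⟩ := symmdiff_coarse_bound (ℓ := ℓ) R₁ hR₁
  obtain ⟨hf₂, he₂⟩ := symmdiff_coarse_bound (ℓ := ℓ) R₂ hR₂
  set C := coarse ℓ R₁ with hC
  rw [← hcoarse] at he₂ hf₂
  have hsub : symmDiff R₁ R₂ ⊆ (symmDiff R₁ C) ∪ (symmDiff R₂ C) := by
    intro p hp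
    have := symmDiff_triangle R₁ C R₂ hp
    rcases this with h | h
    · exact Or.inl h
    · exact Or.inr (by rwa [symmDiff_comm])
  have hfin : ((symmDiff R₁ C) ∪ (symmDiff R₂ C)).Finite := hf₁.union hf₂
  have hnat : (symmDiff R₁ R₂).ncard ≤ 2 * K * 2 ^ ℓ * n := by
    calc (symmDiff R₁ R₂).ncard ≤ ((symmDiff R₁ C) ∪ (symmDiff R₂ C)).ncard :=
          Set.ncard_le_ncard hsub hfin
      _ ≤ (symmDiff R₁ C).ncard + (symmDiff R₂ C).ncard := Set.ncard_union_le _ _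
      _ ≤ K * 2 ^ ℓ * n + K * 2 ^ ℓ * n := by
          apply Nat.add_le_add
          · calc (symmDiff R₁ C).ncard ≤ K * 2 ^ ℓ * (extBoundary R₁).ncard := by
                  rw [hK]; exact he₁
              _ ≤ K * 2 ^ ℓ * n := Nat.mul_le_mul_left _ hb₁
          · calc (symmDiff R₂ C).ncard ≤ K * 2 ^ ℓ * (extBoundary R₂).ncard := by
                  rw [hK]; exact he₂
              _ ≤ K * 2 ^ ℓ * n := Nat.mul_le_mul_left _ hb₂
      _ = 2 * K * 2 ^ ℓ * n := by ring
  have hreal : ((symmDiff R₁ R₂).ncard : ℝ) ≤ (2 * K : ℝ) * 2 ^ ℓ * n := by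
    have := (Nat.cast_le (α := ℝ)).2 hnat
    push_cast at this ⊢
    linarith
  have hsqrt2ℓ : Real.sqrt ((2 : ℝ) ^ ℓ) = (2 : ℝ) ^ ((ℓ : ℝ) / 2) := by
    rw [Real.sqrt_eq_rpow, ← Real.rpow_natCast 2 ℓ, ← Real.rpow_mul (by norm_num)]
    ring_nf
  calc Real.sqrt ((symmDiff R₁ R₂).ncard)
      ≤ Real.sqrt ((2 * K : ℝ) * 2 ^ ℓ * n) := Real.sqrt_le_sqrt hreal
    _ = Real.sqrt ((2 * K : ℝ)) * Real.sqrt ((2 : ℝ) ^ ℓ) * Real.sqrt n := by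
        rw [Real.sqrt_mul (by positivity), Real.sqrt_mul (by positivity)]
    _ = Real.sqrt (2 * K) * (2 : ℝ) ^ ((ℓ : ℝ) / 2) * Real.sqrt n := by
        rw [hsqrt2ℓ]
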